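/- Fix k, r ∈ ℕ with r ≤ k. The number of pairs (D, M), where D is a subset of Fin k and M is a cup diagram on D (with respect to the order induced from Fin k) leaving exactly r elements of D unmatched, equals Σ_{c=0}^{⌊(k−r)/2⌋} C(k, r+2c)·(C(r+2c, c) − C(r+2c, c−1)), with the convention C(n, −1) = 0. (Such pairs are in bijection with the vertically symmetric Motzkin diagrams on k vertices of rank r.) -/

import Mathlib

open Finset
open scoped Classical

/-- A cup diagram on a subset `D` of `Fin k` (with the induced order): a set of
arcs `(a, b)` with endpoints in `D`, `a < b`, that are pairwise disjoint,
noncrossing, and such that no unmatched element of `D` lies strictly between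
the endpoints of an arc. -/
def IsCupDiagramOn {k : ℕ} (D : Finset (Fin k)) (M : Finset (Fin k × Fin k)) :
    Prop :=
  (∀ p ∈ M, p.1 ∈ D ∧ p.2 ∈ D) ∧
  (∀ p ∈ M, p.1 < p.2) ∧
  (∀ p ∈ M, ∀ q ∈ M, p ≠ q →
    p.1 ≠ q.1 ∧ p.1 ≠ q.2 ∧ p.2 ≠ q.1 ∧ p.2 ≠ q.2) ∧
  (∀ p ∈ M, ∀ q ∈ M, ¬(p.1 < q.1 ∧ q.1 < p.2 ∧ p.2 < q.2)) ∧
  (∀ x ∈ D, (∀ p ∈ M, x ≠ p.1 ∧ x ≠ p.2) →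
    ∀ p ∈ M, ¬(p.1 < x ∧ x < p.2))

namespace SMD
variable {k : ℕ}

def cnt (c : Fin 4) (w : Fin k → Fin 4) (i : ℕ) : ℕ :=
  ∑ j : Fin k, if (j : ℕ) < i ∧ w j = c then 1 else 0

lemma cnt_zero (c : Fin 4) (w : Fin k → Fin 4) : cnt c w 0 = 0 := by simp [cnt]

lemma cnt_succ (c : Fin 4) (w : Fin k → Fin 4) (i : ℕ) (hi : i < k) :
    cnt c w (i+1) = cnt c w i + (if w ⟨i, hi⟩ = c then 1 else 0) := by
  unfold cnt
  have h : ∀ j : Fin k, (if (j:ℕ) < i+1 ∧ w j = c then (1:ℕ) else 0) =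
      (if (j:ℕ) < i ∧ w j = c then 1 else 0) +
      (if j = ⟨i,hi⟩ then (if w j = c then (1:ℕ) else 0) else 0) := by
    intro j
    by_cases hc : w j = c
    · simp only [hc, and_true, Fin.ext_iff]
      split_ifs <;> omega
    · simp [hc]
  rw [Finset.sum_congr rfl (fun j _ => h j), Finset.sum_add_distrib,
    Finset.sum_ite_eq' Finset.univ]
  simp

lemma cnt_all (c : Fin 4) (w : Fin k → Fin 4) :
    cnt c w k = (univ.filter fun j => w j = c).card := by
  rw [Finset.card_filter]
  exact Finset.sum_congr rfl (fun j _ => by simp [j.isLt])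

lemma cnt_snoc_le (c : Fin 4) (w : Fin k → Fin 4) (x : Fin 4) (i : ℕ) (hi : i ≤ k) :
    cnt c (Fin.snoc w x) i = cnt c w i := by
  unfold cnt
  rw [Fin.sum_univ_castSucc]
  have : ¬ ((k:ℕ) < i) := by omega
  simp [this]

lemma cnt_snoc_top (c : Fin 4) (w : Fin k → Fin 4) (x : Fin 4) :
    cnt c (Fin.snoc w x) (k+1) = cnt c w k + (if x = c then 1 else 0) := by
  unfold cnt
  rw [Fin.sum_univ_castSucc]
  have h1 : ∀ j : Fin k, ((j:ℕ) < k+1) := fun j => by omega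
  have h2 : ∀ j : Fin k, ((j:ℕ) < k) := fun j => j.isLt
  simp [h1, h2]


/-- valid word with given counts of U (=1), L (=2), R (=3) letters -/
def VW (w : Fin k → Fin 4) (r a b : ℕ) : Prop :=
  (∀ i ≤ k, cnt 3 w i ≤ cnt 2 w i) ∧
  (∀ j : Fin k, w j = 1 → cnt 2 w (j:ℕ) = cnt 3 w (j:ℕ)) ∧
  cnt 1 w k = r ∧ cnt 2 w k = a ∧ cnt 3 w k = b

noncomputable def W (k r a b : ℕ) : ℕ :=
  ((univ : Finset (Fin k → Fin 4)).filter fun w => VW w r a b).card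

lemma VW_b_le_a {w : Fin k → Fin 4} {r a b : ℕ} (h : VW w r a b) : b ≤ a := by
  obtain ⟨h1, _, _, h4, h5⟩ := h
  have := h1 k le_rfl; omega

lemma vw_snoc (w : Fin k → Fin 4) (x : Fin 4) (r a b : ℕ) :
    VW (Fin.snoc w x) r a b ↔
      ((x = 0 ∧ VW w r a b) ∨
       (x = 1 ∧ 1 ≤ r ∧ a = b ∧ VW w (r-1) a b) ∨
       (x = 2 ∧ 1 ≤ a ∧ VW w r (a-1) b) ∨
       (x = 3 ∧ 1 ≤ b ∧ b ≤ a ∧ VW w r a (b-1))) := by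
  have key : ∀ r a b, VW (Fin.snoc w x) r a b ↔
      ((∀ i ≤ k, cnt 3 w i ≤ cnt 2 w i) ∧
       (cnt 3 w k + (if x = 3 then 1 else 0) ≤ cnt 2 w k + (if x = 2 then 1 else 0)) ∧
       (∀ j : Fin k, w j = 1 → cnt 2 w (j:ℕ) = cnt 3 w (j:ℕ)) ∧
       (x = 1 → cnt 2 w k = cnt 3 w k) ∧
       cnt 1 w k + (if x = 1 then 1 else 0) = r ∧
       cnt 2 w k + (if x = 2 then 1 else 0) = a ∧
       cnt 3 w k + (if x = 3 then 1 else 0) = b) := by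
    intro r a b
    constructor
    · rintro ⟨h1, h2, h3, h4, h5⟩
      refine ⟨fun i hi => by have := h1 i (by omega); rwa [cnt_snoc_le _ _ _ _ hi, cnt_snoc_le _ _ _ _ hi] at this,
        by have := h1 (k+1) le_rfl; rwa [cnt_snoc_top, cnt_snoc_top] at this,
        fun j hj => ?_, fun hx => ?_, ?_, ?_, ?_⟩
      · have := h2 (Fin.castSucc j) (by simpa using hj)
        rwa [cnt_snoc_le _ _ _ _ (by simpa using j.isLt.le), cnt_snoc_le _ _ _ _ (by simpa using j.isLt.le), Fin.coe_castSucc] at this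
      · have := h2 (Fin.last k) (by simpa using hx)
        rwa [Fin.val_last, cnt_snoc_le _ _ _ _ le_rfl, cnt_snoc_le _ _ _ _ le_rfl] at this
      · rw [← h3, cnt_snoc_top]
      · rw [← h4, cnt_snoc_top]
      · rw [← h5, cnt_snoc_top]
    · rintro ⟨h1, h1', h2, h2', h3, h4, h5⟩
      refine ⟨fun i hi => ?_, fun j hj => ?_, ?_, ?_, ?_⟩
      · rcases Nat.lt_succ_iff_lt_or_eq.mp (Nat.lt_succ_of_le hi) with h | h
        · rw [cnt_snoc_le _ _ _ _ (by omega), cnt_snoc_le _ _ _ _ (by omega)]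
          exact h1 i (by omega)
        · subst h; rw [cnt_snoc_top, cnt_snoc_top]; exact h1'
      · induction j using Fin.lastCases with
        | last =>
          rw [Fin.snoc_last] at hj
          rw [Fin.val_last, cnt_snoc_le _ _ _ _ le_rfl, cnt_snoc_le _ _ _ _ le_rfl]
          exact h2' hj
        | cast j =>
          rw [Fin.snoc_castSucc] at hj
          rw [Fin.coe_castSucc, cnt_snoc_le _ _ _ _ j.isLt.le, cnt_snoc_le _ _ _ _ j.isLt.le]
          exact h2 j hj
      · rw [cnt_snoc_top]; exact h3
      · rw [cnt_snoc_top]; exact h4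
      · rw [cnt_snoc_top]; exact h5
  rw [key]
  have hVW : ∀ r a b, VW w r a b ↔ ((∀ i ≤ k, cnt 3 w i ≤ cnt 2 w i) ∧
       (∀ j : Fin k, w j = 1 → cnt 2 w (j:ℕ) = cnt 3 w (j:ℕ)) ∧
       cnt 1 w k = r ∧ cnt 2 w k = a ∧ cnt 3 w k = b) := fun _ _ _ => Iff.rfl
  have hx4 : x = 0 ∨ x = 1 ∨ x = 2 ∨ x = 3 := by fin_cases x <;> simp
  rcases hx4 with rfl|rfl|rfl|rfl <;>
    simp only [hVW, show ((0:Fin 4) = 0) = True by decide, show ((1:Fin 4) = 0) = False by decide,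
      show ((2:Fin 4) = 0) = False by decide, show ((3:Fin 4) = 0) = False by decide,
      show ((0:Fin 4) = 1) = False by decide, show ((0:Fin 4) = 2) = False by decide,
      show ((0:Fin 4) = 3) = False by decide, show ((1:Fin 4) = 1) = True by decide,
      show ((1:Fin 4) = 2) = False by decide, show ((1:Fin 4) = 3) = False by decide,
      show ((2:Fin 4) = 1) = False by decide, show ((2:Fin 4) = 2) = True by decide,
      show ((2:Fin 4) = 3) = False by decide, show ((3:Fin 4) = 1) = False by decide,
      show ((3:Fin 4) = 2) = False by decide, show ((3:Fin 4) = 3) = True by decide,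
      if_true, if_false, Nat.add_zero, true_implies, false_implies, true_and, false_and,
      and_true, and_false, false_or, or_false]
  · tauto
  · constructor
    · rintro ⟨h1, h1', h2, h2', h3, h4, h5⟩
      exact ⟨by omega, by omega, h1, h2, by omega, h4, h5⟩
    · rintro ⟨hr, hab, h1, h2, h3, h4, h5⟩
      exact ⟨h1, by omega, h2, by omega, by omega, h4, h5⟩
  · constructor
    · rintro ⟨h1, h1', h2, h3, h4, h5⟩
      exact ⟨by omega, h1, h2, h3, by omega, h5⟩
    · rintro ⟨ha, h1, h2, h3, h4, h5⟩
      have hba : cnt 3 w k ≤ cnt 2 w k := h1 k le_rfl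
      exact ⟨h1, by omega, h2, h3, by omega, h5⟩
  · constructor
    · rintro ⟨h1, h1', h2, h3, h4, h5⟩
      exact ⟨by omega, by omega, h1, h2, h3, h4, by omega⟩
    · rintro ⟨hb, hba, h1, h2, h3, h4, h5⟩
      exact ⟨h1, by omega, h2, h3, h4, by omega⟩


lemma W_zero {k r a b : ℕ} (h : a < b) : W k r a b = 0 := by
  unfold W
  rw [Finset.card_eq_zero, Finset.filter_eq_empty_iff]
  intro w _ hw
  exact absurd (VW_b_le_a hw) (by omega)

lemma W_succ (r a b : ℕ) :
    W (k+1) r a b = W k r a b + (if a = b ∧ 1 ≤ r then W k (r-1) a b else 0)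
      + (if 1 ≤ a then W k r (a-1) b else 0)
      + (if 1 ≤ b ∧ b ≤ a then W k r a (b-1) else 0) := by
  unfold W
  rw [Finset.card_eq_sum_card_fiberwise
    (f := fun w : Fin (k+1) → Fin 4 => w (Fin.last k)) (t := univ) (fun w _ => mem_univ _)]
  have fib : ∀ x : Fin 4,
      ((((univ : Finset (Fin (k+1) → Fin 4)).filter fun w => VW w r a b).filter
        (fun w => w (Fin.last k) = x)).card : ℕ)
      = ((univ : Finset (Fin k → Fin 4)).filter fun v => VW (Fin.snoc v x) r a b).card := by
    intro x
    apply Finset.card_nbij' (i := fun w => Fin.init w) (j := fun v => Fin.snoc v x)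
    · intro w hw
      simp only [Finset.mem_coe, Finset.mem_filter, Finset.mem_univ, true_and] at hw ⊢
      rw [← hw.2, Fin.snoc_init_self]
      exact hw.1
    · intro v hv
      simp only [Finset.mem_coe, Finset.mem_filter, Finset.mem_univ, true_and] at hv ⊢
      exact ⟨hv, Fin.snoc_last _ _⟩
    · intro w hw
      simp only [Finset.mem_coe, Finset.mem_filter] at hw
      show Fin.snoc (Fin.init w) x = w
      rw [← hw.2, Fin.snoc_init_self]
    · intro v hv
      exact Fin.init_snoc _ _
  rw [Fin.sum_univ_four]
  rw [fib 0, fib 1, fib 2, fib 3]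
  have e0 : ∀ v : Fin k → Fin 4, VW (Fin.snoc v 0) r a b ↔ VW v r a b := by
    intro v; rw [vw_snoc]
    constructor
    · rintro (⟨_,h⟩|⟨h,_⟩|⟨h,_⟩|⟨h,_⟩)
      exacts [h, absurd h (by decide), absurd h (by decide), absurd h (by decide)]
    · exact fun h => Or.inl ⟨rfl, h⟩
  have e1 : ∀ v : Fin k → Fin 4, VW (Fin.snoc v 1) r a b ↔ (1 ≤ r ∧ a = b ∧ VW v (r-1) a b) := by
    intro v; rw [vw_snoc]
    constructor
    · rintro (⟨h,_⟩|⟨_,h⟩|⟨h,_⟩|⟨h,_⟩)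
      exacts [absurd h (by decide), h, absurd h (by decide), absurd h (by decide)]
    · exact fun h => Or.inr (Or.inl ⟨rfl, h⟩)
  have e2 : ∀ v : Fin k → Fin 4, VW (Fin.snoc v 2) r a b ↔ (1 ≤ a ∧ VW v r (a-1) b) := by
    intro v; rw [vw_snoc]
    constructor
    · rintro (⟨h,_⟩|⟨h,_⟩|⟨_,h⟩|⟨h,_⟩)
      exacts [absurd h (by decide), absurd h (by decide), h, absurd h (by decide)]
    · exact fun h => Or.inr (Or.inr (Or.inl ⟨rfl, h⟩))
  have e3 : ∀ v : Fin k → Fin 4, VW (Fin.snoc v 3) r a b ↔ (1 ≤ b ∧ b ≤ a ∧ VW v r a (b-1)) := by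
    intro v; rw [vw_snoc]
    constructor
    · rintro (⟨h,_⟩|⟨h,_⟩|⟨h,_⟩|⟨_,h⟩)
      exacts [absurd h (by decide), absurd h (by decide), absurd h (by decide), h]
    · exact fun h => Or.inr (Or.inr (Or.inr ⟨rfl, h⟩))
  have c0 : ((univ : Finset (Fin k → Fin 4)).filter fun v => VW (Fin.snoc v 0) r a b).card
      = W k r a b := by
    unfold W; congr 1; exact Finset.filter_congr (fun v _ => e0 v)
  have c1 : ((univ : Finset (Fin k → Fin 4)).filter fun v => VW (Fin.snoc v 1) r a b).card
      = (if a = b ∧ 1 ≤ r then W k (r-1) a b else 0) := by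
    by_cases h : a = b ∧ 1 ≤ r
    · rw [if_pos h]; unfold W; congr 1
      refine Finset.filter_congr (fun v _ => ?_)
      rw [e1]; exact ⟨fun hh => hh.2.2, fun hh => ⟨h.2, h.1, hh⟩⟩
    · rw [if_neg h, Finset.card_eq_zero, Finset.filter_eq_empty_iff]
      intro v _ hv; rw [e1] at hv; exact h ⟨hv.2.1, hv.1⟩
  have c2 : ((univ : Finset (Fin k → Fin 4)).filter fun v => VW (Fin.snoc v 2) r a b).card
      = (if 1 ≤ a then W k r (a-1) b else 0) := by
    by_cases h : 1 ≤ a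
    · rw [if_pos h]; unfold W; congr 1
      refine Finset.filter_congr (fun v _ => ?_)
      rw [e2]; exact ⟨fun hh => hh.2, fun hh => ⟨h, hh⟩⟩
    · rw [if_neg h, Finset.card_eq_zero, Finset.filter_eq_empty_iff]
      intro v _ hv; rw [e2] at hv; exact h hv.1
  have c3 : ((univ : Finset (Fin k → Fin 4)).filter fun v => VW (Fin.snoc v 3) r a b).card
      = (if 1 ≤ b ∧ b ≤ a then W k r a (b-1) else 0) := by
    by_cases h : 1 ≤ b ∧ b ≤ a
    · rw [if_pos h]; unfold W; congr 1
      refine Finset.filter_congr (fun v _ => ?_)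
      rw [e3]; exact ⟨fun hh => hh.2.2, fun hh => ⟨h.1, h.2, hh⟩⟩
    · rw [if_neg h, Finset.card_eq_zero, Finset.filter_eq_empty_iff]
      intro v _ hv; rw [e3] at hv; exact h ⟨hv.1, hv.2.1⟩
  rw [c0, c1, c2, c3]
  unfold W
  rfl


end SMD

namespace SMD2
open SMD

def Bc (n b : ℕ) : ℤ := (n.choose b : ℤ) - (if b = 0 then 0 else (n.choose (b-1) : ℤ))

lemma Bc_pascal (m b : ℕ) : Bc (m+1) b = Bc m b + (if 1 ≤ b then Bc m (b-1) else 0) := by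
  match b with
  | 0 => simp [Bc]
  | 1 => simp [Bc, Nat.choose_succ_succ]
  | (c+2) =>
    have p1 : ((m+1).choose (c+2)) = m.choose (c+1) + m.choose (c+2) := Nat.choose_succ_succ _ _
    have p2 : ((m+1).choose (c+1)) = m.choose c + m.choose (c+1) := Nat.choose_succ_succ _ _
    simp only [Bc, if_neg (by omega : ¬(c+2 = 0)), if_pos (by omega : 1 ≤ c+2),
      if_neg (by omega : ¬(c+1 = 0)), show c+2-1 = c+1 from rfl, show c+1-1 = c from rfl,
      p1, p2]
    push_cast
    ring

lemma Bc_central (b : ℕ) (hb : 1 ≤ b) : Bc (2*b-1) b = 0 := by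
  unfold Bc
  rw [if_neg (by omega)]
  have h : (2*b-1).choose ((2*b-1) - (b-1)) = (2*b-1).choose (b-1) :=
    Nat.choose_symm (by omega)
  rw [show (2*b-1) - (b-1) = b by omega] at h
  rw [h]; ring

theorem W_eq (k : ℕ) : ∀ r a b : ℕ, b ≤ a →
    (W k r a b : ℤ) = (k.choose (r+a+b) : ℤ) * Bc (r+a+b) b := by
  induction k with
  | zero =>
    intro r a b hba
    have hVW0 : ∀ w : Fin 0 → Fin 4, VW w r a b ↔ (r = 0 ∧ a = 0 ∧ b = 0) := by
      intro w
      unfold VW cnt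
      simp [eq_comm]
    by_cases h : r = 0 ∧ a = 0 ∧ b = 0
    · obtain ⟨rfl, rfl, rfl⟩ := h
      have : (W 0 0 0 0 : ℕ) = 1 := by
        unfold W
        rw [Finset.filter_true_of_mem (fun w _ => (hVW0 w).mpr ⟨rfl, rfl, rfl⟩)]
        simp
      rw [this]; simp [Bc]
    · have : (W 0 r a b : ℕ) = 0 := by
        unfold W
        rw [Finset.card_eq_zero, Finset.filter_eq_empty_iff]
        intro w _ hw
        exact h ((hVW0 w).mp hw)
      rw [this, Nat.choose_eq_zero_of_lt (by omega)]
      simp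
  | succ k ih =>
    intro r a b hba
    have hW := W_succ (k := k) r a b
    have key : (W (k+1) r a b : ℤ) = (W k r a b : ℤ)
        + (if a = b ∧ 1 ≤ r then (W k (r-1) a b : ℤ) else 0)
        + (if 1 ≤ a then (W k r (a-1) b : ℤ) else 0)
        + (if 1 ≤ b then (W k r a (b-1) : ℤ) else 0) := by
      rw [hW]
      push_cast
      have : (1 ≤ b ∧ b ≤ a) ↔ (1 ≤ b) := by constructor <;> (intro h; first | exact h.1 | exact ⟨h, hba⟩)
      rw [if_congr this rfl rfl]
    rcases Nat.eq_zero_or_pos (r+a+b) with hn | hn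
    · have hr : r = 0 := by omega
      have ha : a = 0 := by omega
      have hb : b = 0 := by omega
      subst hr; subst ha; subst hb
      rw [key, ih 0 0 0 le_rfl]
      norm_num
    · obtain ⟨m, hm⟩ : ∃ m, r + a + b = m + 1 := ⟨r+a+b-1, by omega⟩
      have hpas : ((k+1).choose (r+a+b) : ℤ)
          = (k.choose (r+a+b) : ℤ) + (k.choose m : ℤ) := by
        rw [hm, Nat.choose_succ_succ]
        push_cast; ring
      have hBp : Bc (r+a+b) b = Bc m b + (if 1 ≤ b then Bc m (b-1) else 0) := by
        rw [hm]; exact Bc_pascal m b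
      rw [key, ih r a b hba, hpas, hBp]
      by_cases hb0 : 1 ≤ b
      · rw [if_pos hb0, if_pos hb0, ih r a (b-1) (by omega),
          show r + a + (b-1) = m by omega]
        by_cases hab : b = a
        · subst hab
          rw [show (if 1 ≤ b then (W k r (b-1) b : ℤ) else 0) = 0 by
            rw [if_pos hb0]; norm_cast; exact W_zero (by omega)]
          by_cases hr : 1 ≤ r
          · rw [if_pos ⟨rfl, hr⟩, ih (r-1) b b le_rfl, show r-1+b+b = m by omega]
            ring
          · rw [if_neg (by tauto)]
            have hc : Bc m b = 0 := by
              rw [show m = 2*b-1 by omega]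
              exact Bc_central b hb0
            rw [hc]; ring
        · have hba' : b < a := by omega
          rw [if_neg (by tauto), if_pos (by omega), ih r (a-1) b (by omega),
            show r + (a-1) + b = m by omega]
          ring
      · have hb : b = 0 := by omega
        subst hb
        rw [if_neg hb0, if_neg hb0]
        by_cases ha : 1 ≤ a
        · rw [if_neg (by omega : ¬(a = 0 ∧ 1 ≤ r)), if_pos ha, ih r (a-1) 0 (by omega),
            show r + (a-1) + 0 = m by omega]
          simp only [Bc, if_pos rfl, Nat.choose_zero_right]
          push_cast
          ring
        · have ha0 : a = 0 := by omega
          subst ha0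
          have hr : 1 ≤ r := by omega
          rw [if_pos ⟨rfl, hr⟩, if_neg (by omega : ¬(1 ≤ (0:ℕ))), ih (r-1) 0 0 le_rfl,
            show r-1+0+0 = m by omega]
          simp only [Bc, if_pos rfl, Nat.choose_zero_right]
          push_cast
          ring
  
end SMD2

namespace SMD
variable {k : ℕ}

lemma cnt_card (c : Fin 4) (w : Fin k → Fin 4) (i : ℕ) :
    cnt c w i = (univ.filter fun j : Fin k => (j:ℕ) < i ∧ w j = c).card := by
  rw [Finset.card_filter]; rfl

/-- the word associated to a pair (D, M) -/
noncomputable def wordOf (D : Finset (Fin k)) (M : Finset (Fin k × Fin k)) :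
    Fin k → Fin 4 :=
  fun i => if i ∈ D then
    (if ∃ p ∈ M, p.1 = i then 2 else if ∃ p ∈ M, p.2 = i then 3 else 1) else 0

section CupBasics
variable {D : Finset (Fin k)} {M : Finset (Fin k × Fin k)}
  (H : IsCupDiagramOn D M)

lemma eq_of_shares (H : IsCupDiagramOn D M) {p q : Fin k × Fin k}
    (hp : p ∈ M) (hq : q ∈ M)
    (h : p.1 = q.1 ∨ p.1 = q.2 ∨ p.2 = q.1 ∨ p.2 = q.2) : p = q := by
  by_contra hne
  obtain ⟨h1, h2, h3, h4⟩ := H.2.2.1 p hp q hq hne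
  tauto

lemma wordOf_eq_zero_iff (H : IsCupDiagramOn D M) {i : Fin k} :
    wordOf D M i = 0 ↔ i ∉ D := by
  unfold wordOf
  split_ifs with h h1 h2 <;> simp_all <;> decide

lemma wordOf_eq_two_iff (H : IsCupDiagramOn D M) {i : Fin k} :
    wordOf D M i = 2 ↔ ∃ p ∈ M, p.1 = i := by
  unfold wordOf
  constructor
  · intro hw
    split_ifs at hw with h h1 h2
    · exact h1
    · exact absurd hw (by decide)
    · exact absurd hw (by decide)
    · exact absurd hw (by decide)
  · intro h
    obtain ⟨p, hp, hpi⟩ := h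
    rw [if_pos (hpi ▸ (H.1 p hp).1), if_pos ⟨p, hp, hpi⟩]

lemma wordOf_eq_three_iff (H : IsCupDiagramOn D M) {i : Fin k} :
    wordOf D M i = 3 ↔ ∃ p ∈ M, p.2 = i := by
  unfold wordOf
  constructor
  · intro hw
    split_ifs at hw with h h1 h2
    · exact absurd hw (by decide)
    · exact h2
    · exact absurd hw (by decide)
    · exact absurd hw (by decide)
  · intro h
    obtain ⟨p, hp, hpi⟩ := h
    rw [if_pos (hpi ▸ (H.1 p hp).2)]
    rw [if_neg, if_pos ⟨p, hp, hpi⟩]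
    rintro ⟨q, hq, hqi⟩
    have heq : q = p := eq_of_shares H hq hp (Or.inr (Or.inl (hqi.trans hpi.symm)))
    subst heq
    exact absurd (hqi.trans hpi.symm) (ne_of_lt (H.2.1 q hq))

lemma wordOf_eq_one_iff (H : IsCupDiagramOn D M) {i : Fin k} :
    wordOf D M i = 1 ↔ i ∈ D ∧ ∀ p ∈ M, i ≠ p.1 ∧ i ≠ p.2 := by
  unfold wordOf
  constructor
  · intro hw
    split_ifs at hw with h h1 h2
    · exact absurd hw (by decide)
    · exact absurd hw (by decide)
    · refine ⟨h, fun p hp => ⟨fun hh => h1 ⟨p, hp, hh.symm⟩, fun hh => h2 ⟨p, hp, hh.symm⟩⟩⟩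
    · exact absurd hw (by decide)
  · rintro ⟨hD, hun⟩
    rw [if_pos hD, if_neg, if_neg]
    · rintro ⟨p, hp, hpi⟩; exact (hun p hp).2 hpi.symm
    · rintro ⟨p, hp, hpi⟩; exact (hun p hp).1 hpi.symm

end CupBasics
end SMD

namespace SMD

def VT {k : ℕ} (w : Fin k → Fin 4) (r : ℕ) : Prop :=
  (∀ i ≤ k, cnt 3 w i ≤ cnt 2 w i) ∧
  (∀ j : Fin k, w j = 1 → cnt 2 w (j:ℕ) = cnt 3 w (j:ℕ)) ∧
  cnt 1 w k = r ∧ cnt 2 w k = cnt 3 w k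

variable {k : ℕ} {D : Finset (Fin k)} {M : Finset (Fin k × Fin k)}

noncomputable def leftOf (M : Finset (Fin k × Fin k)) (j : Fin k) : Fin k :=
  if h : ∃ p ∈ M, p.2 = j then h.choose.1 else j

lemma leftOf_mem {M : Finset (Fin k × Fin k)} {j : Fin k} (h : ∃ p ∈ M, p.2 = j) :
    ∃ p ∈ M, p.2 = j ∧ p.1 = leftOf M j := by
  unfold leftOf
  rw [dif_pos h]
  obtain ⟨hm, he⟩ := h.choose_spec
  exact ⟨h.choose, hm, he, rfl⟩

lemma fst_injOn (H : IsCupDiagramOn D M) {s : Finset (Fin k × Fin k)}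
    (hs : s ⊆ M) : Set.InjOn Prod.fst (s : Set (Fin k × Fin k)) := by
  intro p hp q hq h
  exact eq_of_shares H (hs hp) (hs hq) (Or.inl h)

lemma snd_injOn (H : IsCupDiagramOn D M) {s : Finset (Fin k × Fin k)}
    (hs : s ⊆ M) : Set.InjOn Prod.snd (s : Set (Fin k × Fin k)) := by
  intro p hp q hq h
  exact eq_of_shares H (hs hp) (hs hq) (Or.inr (Or.inr (Or.inr h)))

lemma VT_wordOf (H : IsCupDiagramOn D M)
    (hr : (D.filter fun x => ∀ p ∈ M, x ≠ p.1 ∧ x ≠ p.2).card = r) :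
    VT (wordOf D M) r := by
  refine ⟨fun i hi => ?_, fun j hj => ?_, ?_, ?_⟩
  · -- prefix condition
    rw [cnt_card, cnt_card]
    apply Finset.card_le_card_of_injOn (leftOf M)
    · intro j hj
      simp only [Finset.mem_coe, Finset.mem_filter, Finset.mem_univ, true_and] at hj ⊢
      obtain ⟨hji, hj3⟩ := hj
      obtain ⟨p, hpM, hpj, hpl⟩ := leftOf_mem ((wordOf_eq_three_iff H).mp hj3)
      constructor
      · have h1 : p.1 < p.2 := H.2.1 _ hpM
        rw [Fin.lt_def, hpj] at h1
        rw [← hpl]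
        omega
      · exact (wordOf_eq_two_iff H).mpr ⟨p, hpM, hpl⟩
    · intro j hj j' hj' hjj
      simp only [Finset.coe_filter, Set.mem_setOf_eq] at hj hj'
      obtain ⟨p, hpM, hpj, hpl⟩ := leftOf_mem ((wordOf_eq_three_iff H).mp hj.2.2)
      obtain ⟨p', hpM', hpj', hpl'⟩ := leftOf_mem ((wordOf_eq_three_iff H).mp hj'.2.2)
      have : p = p' := eq_of_shares H hpM hpM' (Or.inl (by rw [hpl, hpl', hjj]))
      rw [← hpj, ← hpj']
      exact congrArg Prod.snd this
  · -- U condition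
    obtain ⟨hjD, hun⟩ := (wordOf_eq_one_iff H).mp hj
    have e2 : (univ.filter fun i : Fin k => (i:ℕ) < (j:ℕ) ∧ wordOf D M i = 2)
        = (M.filter fun p => (p.1:ℕ) < (j:ℕ)).image Prod.fst := by
      ext i
      simp only [Finset.mem_filter, Finset.mem_univ, true_and, Finset.mem_image]
      constructor
      · rintro ⟨hij, h2⟩
        obtain ⟨p, hp, hpi⟩ := (wordOf_eq_two_iff H).mp h2
        exact ⟨p, ⟨hp, by rw [hpi]; exact hij⟩, hpi⟩
      · rintro ⟨p, ⟨hp, hpj⟩, hpi⟩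
        exact ⟨hpi ▸ hpj, (wordOf_eq_two_iff H).mpr ⟨p, hp, hpi⟩⟩
    have e3 : (univ.filter fun i : Fin k => (i:ℕ) < (j:ℕ) ∧ wordOf D M i = 3)
        = (M.filter fun p => (p.2:ℕ) < (j:ℕ)).image Prod.snd := by
      ext i
      simp only [Finset.mem_filter, Finset.mem_univ, true_and, Finset.mem_image]
      constructor
      · rintro ⟨hij, h3⟩
        obtain ⟨p, hp, hpi⟩ := (wordOf_eq_three_iff H).mp h3
        exact ⟨p, ⟨hp, by rw [hpi]; exact hij⟩, hpi⟩
      · rintro ⟨p, ⟨hp, hpj⟩, hpi⟩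
        exact ⟨hpi ▸ hpj, (wordOf_eq_three_iff H).mpr ⟨p, hp, hpi⟩⟩
    have efil : (M.filter fun p => (p.1:ℕ) < (j:ℕ)) = (M.filter fun p => (p.2:ℕ) < (j:ℕ)) := by
      apply Finset.filter_congr
      intro p hp
      constructor
      · intro h1
        by_contra h2
        have hne : (p.2 : ℕ) ≠ (j : ℕ) := fun hh => (hun p hp).2 (Fin.ext hh.symm)
        have hlt : j < p.2 := by rw [Fin.lt_def]; omega
        have h1' : p.1 < j := by rw [Fin.lt_def]; exact h1
        exact H.2.2.2.2 j hjD hun p hp ⟨h1', hlt⟩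
      · intro h2
        have : p.1 < p.2 := H.2.1 p hp
        rw [Fin.lt_def] at this
        omega
    rw [cnt_card, cnt_card, e2, e3, efil,
      Finset.card_image_of_injOn (fst_injOn H (Finset.filter_subset _ _)),
      Finset.card_image_of_injOn (snd_injOn H (Finset.filter_subset _ _))]
  · -- count of 1s
    rw [cnt_all, ← hr]
    congr 1
    ext x
    simp only [Finset.mem_filter, Finset.mem_univ, true_and]
    rw [wordOf_eq_one_iff H]
  · -- total balance
    have h2 : univ.filter (fun j => wordOf D M j = 2) = M.image Prod.fst := by
      ext j
      simp only [Finset.mem_filter, Finset.mem_univ, true_and, Finset.mem_image]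
      rw [wordOf_eq_two_iff H]
    have h3 : univ.filter (fun j => wordOf D M j = 3) = M.image Prod.snd := by
      ext j
      simp only [Finset.mem_filter, Finset.mem_univ, true_and, Finset.mem_image]
      rw [wordOf_eq_three_iff H]
    rw [cnt_all, cnt_all, h2, h3,
      Finset.card_image_of_injOn (fst_injOn H (subset_refl _)),
      Finset.card_image_of_injOn (snd_injOn H (subset_refl _))]

end SMD

namespace SMD
variable {k r : ℕ}

def dep (w : Fin k → Fin 4) (i : ℕ) : ℤ := (cnt 2 w i : ℤ) - (cnt 3 w i : ℤ)

noncomputable def Mw (w : Fin k → Fin 4) : Finset (Fin k × Fin k) :=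
  univ.filter fun p => w p.1 = 2 ∧ p.1 < p.2 ∧ dep w ((p.2:ℕ)+1) = dep w (p.1:ℕ) ∧
    ∀ t : ℕ, (p.1:ℕ) < t → t ≤ (p.2:ℕ) → dep w (p.1:ℕ) < dep w t

lemma mem_Mw_iff {w : Fin k → Fin 4} {p : Fin k × Fin k} :
    p ∈ Mw w ↔ (w p.1 = 2 ∧ p.1 < p.2 ∧ dep w ((p.2:ℕ)+1) = dep w (p.1:ℕ) ∧
      ∀ t : ℕ, (p.1:ℕ) < t → t ≤ (p.2:ℕ) → dep w (p.1:ℕ) < dep w t) := by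
  simp [Mw]

lemma dep_succ (w : Fin k → Fin 4) (i : ℕ) (hi : i < k) :
    dep w (i+1) = dep w i + (if w ⟨i,hi⟩ = 2 then 1 else 0)
      - (if w ⟨i,hi⟩ = 3 then 1 else 0) := by
  unfold dep
  rw [cnt_succ 2 w i hi, cnt_succ 3 w i hi]
  push_cast
  ring

lemma dep_succ_ge (w : Fin k → Fin 4) (i : ℕ) (hi : i < k) :
    dep w i - 1 ≤ dep w (i+1) := by
  rw [dep_succ w i hi]; split_ifs <;> omega

lemma dep_succ_of_two {w : Fin k → Fin 4} {i : ℕ} (hi : i < k)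
    (hw : w ⟨i,hi⟩ = 2) : dep w (i+1) = dep w i + 1 := by
  rw [dep_succ w i hi, if_pos hw, if_neg (by rw [hw]; decide)]; ring

lemma three_of_dep_lt {w : Fin k → Fin 4} {i : ℕ} (hi : i < k)
    (h : dep w (i+1) < dep w i) : w ⟨i,hi⟩ = 3 := by
  rw [dep_succ w i hi] at h
  split_ifs at h <;> first | assumption | omega

variable {w : Fin k → Fin 4}

lemma dep_zero : dep w 0 = 0 := by simp [dep, cnt_zero]

lemma dep_k (hv : VT w r) : dep w k = 0 := by
  simp [dep, hv.2.2.2]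

lemma dep_nonneg (hv : VT w r) (i : ℕ) (hi : i ≤ k) : 0 ≤ dep w i := by
  have := hv.1 i hi; simp [dep]; omega

lemma fin4_cases (v : Fin 4) : v = 0 ∨ v = 1 ∨ v = 2 ∨ v = 3 := by
  fin_cases v <;> simp

lemma exists_partner (hv : VT w r) (i : Fin k) (h2 : w i = 2) :
    ∃ j : Fin k, (i, j) ∈ Mw w := by
  have hex : ∃ t, (i:ℕ) < t ∧ t ≤ k ∧ dep w t ≤ dep w (i:ℕ) :=
    ⟨k, i.isLt, le_rfl, by rw [dep_k hv]; exact dep_nonneg hv _ i.isLt.le⟩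
  set m := Nat.find hex with hm
  obtain ⟨hm1, hm2, hm3⟩ := Nat.find_spec hex
  rw [← hm] at hm1 hm2 hm3
  have hmin : ∀ t, (i:ℕ) < t → t ≤ k → t < m → dep w (i:ℕ) < dep w t := by
    intro t h1 h2' h3
    have := Nat.find_min hex h3
    push_neg at this
    have := this h1 h2'
    omega
  have hstep : dep w ((i:ℕ)+1) = dep w (i:ℕ) + 1 := dep_succ_of_two i.isLt h2
  have hm4 : (i:ℕ)+2 ≤ m := by
    by_contra hc
    have : m = (i:ℕ)+1 := by omega
    rw [this, hstep] at hm3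
    omega
  have hj : m - 1 < k := by omega
  have hd1 : ∀ t, (i:ℕ) < t → t ≤ m-1 → dep w (i:ℕ) < dep w t :=
    fun t h1 h2' => hmin t h1 (by omega) (by omega)
  have hdm1 : dep w (i:ℕ) < dep w (m-1) := hd1 (m-1) (by omega) le_rfl
  have hge : dep w (m-1) - 1 ≤ dep w m := by
    have := dep_succ_ge w (m-1) hj
    rwa [show m-1+1 = m by omega] at this
  have hdm : dep w m = dep w (i:ℕ) := le_antisymm hm3 (by omega)
  refine ⟨⟨m-1, hj⟩, ?_⟩
  rw [mem_Mw_iff]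
  dsimp only
  refine ⟨h2, ?_, ?_, ?_⟩
  · rw [Fin.lt_def]; exact show (i:ℕ) < m - 1 by omega
  · rw [show m - 1 + 1 = m by omega]
    exact hdm
  · intro t h1 h2'
    exact hd1 t h1 h2'

lemma Mw_snd_letter {p : Fin k × Fin k} (hp : p ∈ Mw w) : w p.2 = 3 := by
  rw [mem_Mw_iff] at hp
  obtain ⟨h2, hlt, hde, hmin⟩ := hp
  have hlt' : (p.1:ℕ) < (p.2:ℕ) := hlt
  have hdj : dep w (p.1:ℕ) < dep w (p.2:ℕ) := hmin _ hlt' le_rfl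
  have : dep w ((p.2:ℕ)+1) < dep w (p.2:ℕ) := by omega
  have h3 := three_of_dep_lt p.2.isLt this
  rwa [Fin.eta] at h3

lemma Mw_right_unique {p q : Fin k × Fin k} (hp : p ∈ Mw w) (hq : q ∈ Mw w)
    (h : p.1 = q.1) : p = q := by
  rw [mem_Mw_iff] at hp hq
  have hval : (p.1:ℕ) = (q.1:ℕ) := congrArg Fin.val h
  have hplt : (p.1:ℕ) < (p.2:ℕ) := hp.2.1
  have hqlt : (q.1:ℕ) < (q.2:ℕ) := hq.2.1
  rcases lt_trichotomy (p.2:ℕ) (q.2:ℕ) with hlt | heq | hlt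
  · exfalso
    have h5 := hq.2.2.2 ((p.2:ℕ)+1) (by omega) (by omega)
    rw [hp.2.2.1, hval] at h5
    omega
  · exact Prod.ext h (Fin.ext heq)
  · exfalso
    have h5 := hp.2.2.2 ((q.2:ℕ)+1) (by omega) (by omega)
    rw [hq.2.2.1, hval] at h5
    omega

lemma Mw_left_unique {p q : Fin k × Fin k} (hp : p ∈ Mw w) (hq : q ∈ Mw w)
    (h : p.2 = q.2) : p = q := by
  rw [mem_Mw_iff] at hp hq
  have hval : (p.2:ℕ) = (q.2:ℕ) := congrArg Fin.val h
  have hplt : (p.1:ℕ) < (p.2:ℕ) := hp.2.1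
  have hqlt : (q.1:ℕ) < (q.2:ℕ) := hq.2.1
  rcases lt_trichotomy (p.1:ℕ) (q.1:ℕ) with hlt | heq | hlt
  · exfalso
    have h1 := hp.2.2.2 (q.1:ℕ) hlt (by omega)
    have h2 := hp.2.2.1
    have h3 := hq.2.2.1
    rw [hval] at h2
    omega
  · exact Prod.ext (Fin.ext heq) h
  · exfalso
    have h1 := hq.2.2.2 (p.1:ℕ) hlt (by omega)
    have h2 := hp.2.2.1
    have h3 := hq.2.2.1
    rw [hval] at h2
    omega

lemma Mw_noncross {p q : Fin k × Fin k} (hp : p ∈ Mw w) (hq : q ∈ Mw w) :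
    ¬(p.1 < q.1 ∧ q.1 < p.2 ∧ p.2 < q.2) := by
  rintro ⟨h1, h2, h3⟩
  rw [Fin.lt_def] at h1 h2 h3
  rw [mem_Mw_iff] at hp hq
  have ha := hp.2.2.2 (q.1:ℕ) h1 (by omega)
  have hb := hq.2.2.2 ((p.2:ℕ)+1) (by omega) (by omega)
  rw [hp.2.2.1] at hb
  omega

lemma Mw_r_matched (hv : VT w r) {x : Fin k} (hx : w x = 3) :
    ∃ p ∈ Mw w, p.2 = x := by
  classical
  have himgA : (Mw w).image Prod.fst = univ.filter (fun j => w j = 2) := by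
    ext i
    simp only [Finset.mem_image, Finset.mem_filter, Finset.mem_univ, true_and]
    constructor
    · rintro ⟨p, hp, rfl⟩; exact (mem_Mw_iff.mp hp).1
    · intro h2
      obtain ⟨j, hj⟩ := exists_partner hv i h2
      exact ⟨(i,j), hj, rfl⟩
  have hsub : (Mw w).image Prod.snd ⊆ univ.filter (fun j => w j = 3) := by
    intro i hi
    simp only [Finset.mem_image] at hi
    obtain ⟨p, hp, rfl⟩ := hi
    simp only [Finset.mem_filter, Finset.mem_univ, true_and]
    exact Mw_snd_letter hp
  have hcA : ((Mw w).image Prod.fst).card = (Mw w).card :=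
    Finset.card_image_of_injOn (fun p hp q hq h => Mw_right_unique hp hq h)
  have hcB : ((Mw w).image Prod.snd).card = (Mw w).card :=
    Finset.card_image_of_injOn (fun p hp q hq h => Mw_left_unique hp hq h)
  have hAB : (univ.filter (fun j : Fin k => w j = 2)).card
      = (univ.filter (fun j : Fin k => w j = 3)).card := by
    rw [← cnt_all, ← cnt_all]; exact hv.2.2.2
  have heq : (Mw w).image Prod.snd = univ.filter (fun j => w j = 3) := by
    apply Finset.eq_of_subset_of_card_le hsub
    rw [hcB, ← hcA, himgA, hAB]
  have : x ∈ (Mw w).image Prod.snd := by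
    rw [heq]; simp [hx]
  simpa using this

end SMD

namespace SMD
variable {k r : ℕ} {w : Fin k → Fin 4}

lemma unmatched_letter_one (hv : VT w r) {x : Fin k}
    (hxD : w x ≠ 0) (hun : ∀ p ∈ Mw w, x ≠ p.1 ∧ x ≠ p.2) : w x = 1 := by
  rcases fin4_cases (w x) with h | h | h | h
  · exact absurd h hxD
  · exact h
  · obtain ⟨j, hj⟩ := exists_partner hv x h
    exact absurd rfl (hun (x,j) hj).1
  · obtain ⟨p, hp, hpx⟩ := Mw_r_matched hv h
    exact absurd hpx.symm (hun p hp).2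

lemma cup_Mw (hv : VT w r) :
    IsCupDiagramOn (univ.filter fun i => w i ≠ 0) (Mw w) := by
  refine ⟨?_, ?_, ?_, ?_, ?_⟩
  · intro p hp
    have h2 := (mem_Mw_iff.mp hp).1
    have h3 := Mw_snd_letter hp
    constructor <;> simp only [Finset.mem_filter, Finset.mem_univ, true_and]
    · rw [h2]; decide
    · rw [h3]; decide
  · exact fun p hp => (mem_Mw_iff.mp hp).2.1
  · intro p hp q hq hne
    refine ⟨?_, ?_, ?_, ?_⟩
    · intro h; exact hne (Mw_right_unique hp hq h)
    · intro h
      have h2 := (mem_Mw_iff.mp hp).1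
      have h3 := Mw_snd_letter hq
      rw [h, h3] at h2
      exact absurd h2 (by decide)
    · intro h
      have h2 := (mem_Mw_iff.mp hq).1
      have h3 := Mw_snd_letter hp
      rw [← h, h3] at h2
      exact absurd h2 (by decide)
    · intro h; exact hne (Mw_left_unique hp hq h)
  · exact fun p hp q hq => Mw_noncross hp hq
  · intro x hx hun p hp
    simp only [Finset.mem_filter, Finset.mem_univ, true_and] at hx
    have h1 : w x = 1 := unmatched_letter_one hv hx hun
    rintro ⟨hax, hxb⟩
    rw [Fin.lt_def] at hax hxb
    have hdx : dep w (x:ℕ) = 0 := by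
      have := hv.2.1 x h1
      simp [dep, this]
    have hmin := (mem_Mw_iff.mp hp).2.2.2 (x:ℕ) hax (by omega)
    have hnn := dep_nonneg hv (p.1:ℕ) p.1.isLt.le
    omega

lemma unmatched_set_eq (hv : VT w r) :
    ((univ.filter fun i => w i ≠ 0).filter
      fun x => ∀ p ∈ Mw w, x ≠ p.1 ∧ x ≠ p.2) = univ.filter fun i => w i = 1 := by
  ext x
  simp only [Finset.mem_filter, Finset.mem_univ, true_and]
  constructor
  · rintro ⟨hxD, hun⟩
    exact unmatched_letter_one hv hxD hun
  · intro h1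
    refine ⟨by rw [h1]; decide, fun p hp => ⟨?_, ?_⟩⟩
    · intro h
      have h2 := (mem_Mw_iff.mp hp).1
      rw [← h, h1] at h2
      exact absurd h2 (by decide)
    · intro h
      have h3 := Mw_snd_letter hp
      rw [← h, h1] at h3
      exact absurd h3 (by decide)

lemma wordOf_Mw (hv : VT w r) :
    wordOf (univ.filter fun i => w i ≠ 0) (Mw w) = w := by
  have H := cup_Mw hv
  funext i
  rcases fin4_cases (w i) with h | h | h | h
  · rw [h, (wordOf_eq_zero_iff H).mpr]
    simp only [Finset.mem_filter, Finset.mem_univ, true_and]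
    simp [h]
  · rw [h, (wordOf_eq_one_iff H).mpr]
    refine ⟨by simp [h], fun p hp => ⟨?_, ?_⟩⟩
    · intro hh
      have h2 := (mem_Mw_iff.mp hp).1
      rw [← hh, h] at h2
      exact absurd h2 (by decide)
    · intro hh
      have h3 := Mw_snd_letter hp
      rw [← hh, h] at h3
      exact absurd h3 (by decide)
  · rw [h, (wordOf_eq_two_iff H).mpr]
    obtain ⟨j, hj⟩ := exists_partner hv i h
    exact ⟨(i,j), hj, rfl⟩
  · rw [h, (wordOf_eq_three_iff H).mpr]
    exact Mw_r_matched hv h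

end SMD

namespace SMD
variable {k : ℕ}

lemma D_eq_of_word_eq {D D' : Finset (Fin k)} {M M' : Finset (Fin k × Fin k)}
    (H : IsCupDiagramOn D M) (H' : IsCupDiagramOn D' M')
    (hw : wordOf D M = wordOf D' M') : D = D' := by
  ext x
  have h0 := wordOf_eq_zero_iff H (i := x)
  have h0' := wordOf_eq_zero_iff H' (i := x)
  rw [hw] at h0
  have := h0.symm.trans h0'
  tauto

lemma M_subset_of_word_eq {D D' : Finset (Fin k)} {M M' : Finset (Fin k × Fin k)}
    (H : IsCupDiagramOn D M) (H' : IsCupDiagramOn D' M')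
    (hw : wordOf D M = wordOf D' M') : M ⊆ M' := by
  have hDD : D = D' := D_eq_of_word_eq H H' hw
  suffices main : ∀ N : ℕ, ∀ p ∈ M, (p.2:ℕ) ≤ (p.1:ℕ) + N → p ∈ M' by
    intro p hp
    exact main k p hp (by have := p.2.isLt; omega)
  intro N
  induction N with
  | zero =>
    intro p hp hle
    have := H.2.1 p hp
    rw [Fin.lt_def] at this
    omega
  | succ N ih =>
    intro p hp hle
    have hIn : ∀ q ∈ M, q ≠ p → ((p.1 < q.1 ∧ q.1 < p.2) ∨ (p.1 < q.2 ∧ q.2 < p.2)) →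
        (p.1 < q.1 ∧ q.2 < p.2) := by
      intro q hq hne hcase
      have hq12 := H.2.1 q hq
      have hd := H.2.2.1 q hq p hp hne
      rcases hcase with ⟨h1, h2⟩ | ⟨h1, h2⟩
      · refine ⟨h1, ?_⟩
        rcases lt_trichotomy q.2 p.2 with h | h | h
        · exact h
        · exact absurd h hd.2.2.2
        · exact absurd ⟨h1, h2, h⟩ (H.2.2.2.1 p hp q hq)
      · refine ⟨?_, h2⟩
        rcases lt_trichotomy p.1 q.1 with h | h | h
        · exact h
        · exact absurd h.symm hd.1
        · exact absurd ⟨h, h1, h2⟩ (H.2.2.2.1 q hq p hp)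
    have hIntM' : ∀ x : Fin k, x ∈ D' → p.1 < x → x < p.2 →
        ∃ q ∈ M', (p.1 < q.1 ∧ q.2 < p.2) ∧ (x = q.1 ∨ x = q.2) := by
      intro x hxD h1 h2
      by_cases hm : ∀ q ∈ M, x ≠ q.1 ∧ x ≠ q.2
      · exact absurd ⟨h1, h2⟩ (H.2.2.2.2 x (hDD ▸ hxD) hm p hp)
      · push_neg at hm
        obtain ⟨q, hq, hxq⟩ := hm
        have hxq' : x = q.1 ∨ x = q.2 := by tauto
        have hne : q ≠ p := by
          intro hh
          subst hh
          rcases hxq' with rfl | rfl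
          · exact lt_irrefl _ h1
          · exact lt_irrefl _ h2
        have hint : p.1 < q.1 ∧ q.2 < p.2 := hIn q hq hne
          (by rcases hxq' with rfl | rfl; exacts [Or.inl ⟨h1, h2⟩, Or.inr ⟨h1, h2⟩])
        have hq12 := H.2.1 q hq
        have hb : (q.2:ℕ) ≤ (q.1:ℕ) + N := by
          have i1 : (p.1:ℕ) < (q.1:ℕ) := hint.1
          have i2 : (q.2:ℕ) < (p.2:ℕ) := hint.2
          omega
        exact ⟨q, ih q hq hb, hint, hxq'⟩
    have hA2 : wordOf D' M' p.1 = 2 := by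
      rw [← hw]; exact (wordOf_eq_two_iff H).mpr ⟨p, hp, rfl⟩
    obtain ⟨p', hp', hp'1⟩ := (wordOf_eq_two_iff H').mp hA2
    have hB3 : wordOf D' M' p.2 = 3 := by
      rw [← hw]; exact (wordOf_eq_three_iff H).mpr ⟨p, hp, rfl⟩
    obtain ⟨q', hq', hq'2⟩ := (wordOf_eq_three_iff H').mp hB3
    have hkey : p'.2 = p.2 := by
      have hnotint : ¬(p.1 < p'.2 ∧ p'.2 < p.2) := by
        rintro ⟨h1, h2⟩
        obtain ⟨q, hqM', hqint, hqe⟩ := hIntM' p'.2 ((H'.1 p' hp').2) h1 h2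
        have hqnep' : q ≠ p' := by
          intro hh
          subst hh
          rw [hp'1] at hqint
          exact lt_irrefl _ hqint.1
        have hd := H'.2.2.1 q hqM' p' hp' hqnep'
        rcases hqe with he | he
        · exact hd.2.1 he.symm
        · exact hd.2.2.2 he.symm
      have hlt : p.1 < p'.2 := hp'1 ▸ H'.2.1 p' hp'
      rcases lt_trichotomy p'.2 p.2 with h | h | h
      · exact absurd ⟨hlt, h⟩ hnotint
      · exact h
      · exfalso
        rcases lt_trichotomy q'.1 p.1 with hc | hc | hc
        · exact H'.2.2.2.1 q' hq' p' hp'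
            ⟨by rw [hp'1]; exact hc, by rw [hp'1, hq'2]; exact H.2.1 p hp,
             by rw [hq'2]; exact h⟩
        · have heq : q' = p' := by
            by_contra hne
            exact (H'.2.2.1 q' hq' p' hp' hne).1 (by rw [hc, hp'1])
          rw [← heq, hq'2] at h
          exact lt_irrefl _ h
        · have hq'lt : q'.1 < p.2 := hq'2 ▸ H'.2.1 q' hq'
          obtain ⟨q, hqM', hqint, hqe⟩ := hIntM' q'.1 ((H'.1 q' hq').1) hc hq'lt
          have hqneq' : q ≠ q' := by
            intro hh
            subst hh
            rw [hq'2] at hqint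
            exact lt_irrefl _ hqint.2
          have hd := H'.2.2.1 q hqM' q' hq' hqneq'
          rcases hqe with he | he
          · exact hd.1 he.symm
          · exact hd.2.2.1 he.symm
    have : p' = p := Prod.ext hp'1 hkey
    exact this ▸ hp'

end SMD


open SMD SMD2 in
/-- The number of pairs `(D, M)` of a subset `D ⊆ Fin k` and a cup diagram `M`
on `D` leaving exactly `r` elements of `D` unmatched equals
`Σ_{c=0}^{⌊(k−r)/2⌋} C(k, r+2c)·(C(r+2c, c) − C(r+2c, c−1))`, with the
convention `C(n, −1) = 0`.  Such pairs are in bijection with the vertically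
symmetric Motzkin diagrams on `k` vertices of rank `r`. -/
theorem symmetric_motzkin_diagram_count (k r : ℕ) (hr : r ≤ k) :
    (((Finset.univ.filter
        fun DM : Finset (Fin k) × Finset (Fin k × Fin k) =>
          IsCupDiagramOn DM.1 DM.2 ∧
          (DM.1.filter fun x => ∀ p ∈ DM.2, x ≠ p.1 ∧ x ≠ p.2).card = r).card : ℤ))
      = ∑ c ∈ Finset.range ((k - r) / 2 + 1),
          (Nat.choose k (r + 2 * c) : ℤ) *
            ((Nat.choose (r + 2 * c) c : ℤ) -
              (if c = 0 then 0 else Nat.choose (r + 2 * c) (c - 1))) := by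
  classical
  have step1 : (Finset.univ.filter
        fun DM : Finset (Fin k) × Finset (Fin k × Fin k) =>
          IsCupDiagramOn DM.1 DM.2 ∧
          (DM.1.filter fun x => ∀ p ∈ DM.2, x ≠ p.1 ∧ x ≠ p.2).card = r).card
      = ((univ : Finset (Fin k → Fin 4)).filter fun w => VT w r).card := by
    apply Finset.card_bij (i := fun DM _ => wordOf DM.1 DM.2)
    · intro DM hDM
      simp only [Finset.mem_filter, Finset.mem_univ, true_and] at hDM ⊢
      exact VT_wordOf hDM.1 hDM.2
    · intro a1 ha1 a2 ha2 he
      simp only [Finset.mem_filter, Finset.mem_univ, true_and] at ha1 ha2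
      have hD := D_eq_of_word_eq ha1.1 ha2.1 he
      have hM : a1.2 = a2.2 := subset_antisymm
        (M_subset_of_word_eq ha1.1 ha2.1 he) (M_subset_of_word_eq ha2.1 ha1.1 he.symm)
      exact Prod.ext hD hM
    · intro w hw
      simp only [Finset.mem_filter, Finset.mem_univ, true_and] at hw
      refine ⟨(univ.filter fun i => w i ≠ 0, Mw w), ?_, wordOf_Mw hw⟩
      simp only [Finset.mem_filter, Finset.mem_univ, true_and]
      refine ⟨cup_Mw hw, ?_⟩
      rw [unmatched_set_eq hw, ← cnt_all]
      exact hw.2.2.1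
  have step2 : ((univ : Finset (Fin k → Fin 4)).filter fun w => VT w r).card
      = ∑ c ∈ Finset.range (k+1), W k r c c := by
    rw [Finset.card_eq_sum_card_fiberwise (f := fun w => cnt 2 w k)
      (t := Finset.range (k+1)) ?_]
    · apply Finset.sum_congr rfl
      intro c hc
      congr 1
      ext w
      simp only [Finset.mem_filter, Finset.mem_univ, true_and]
      constructor
      · rintro ⟨⟨h1, h2, h3, h4⟩, hc2⟩
        refine ⟨h1, h2, h3, hc2, ?_⟩
        rw [← h4]
        exact hc2
      · rintro ⟨h1, h2, h3, h4, h5⟩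
        exact ⟨⟨h1, h2, h3, h4.trans h5.symm⟩, h4⟩
    · intro w hw
      rw [Finset.mem_coe, Finset.mem_range, Nat.lt_succ_iff]
      show cnt 2 w k ≤ k
      rw [cnt_all]
      exact (Finset.card_filter_le _ _).trans (by simp)
  rw [step1, step2]
  push_cast
  rw [show (∑ c ∈ Finset.range (k+1), (W k r c c : ℤ))
      = ∑ c ∈ Finset.range (k+1), (Nat.choose k (r + 2*c) : ℤ) *
          ((Nat.choose (r+2*c) c : ℤ) -
            (if c = 0 then 0 else (Nat.choose (r+2*c) (c-1) : ℤ)))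
    from Finset.sum_congr rfl fun c _ => by
      rw [W_eq k r c c le_rfl, show r+c+c = r+2*c by ring]
      rfl]
  refine (Finset.sum_subset (Finset.range_subset_range.mpr (by omega)) ?_).symm
  intro c hc hnc
  rw [Finset.mem_range] at hc hnc
  have hck : k < r + 2*c := by omega
  rw [Nat.choose_eq_zero_of_lt hck]
  push_cast
  ring
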